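/- Let Ω, U, λ, u be as in the setting, let Γᴰ ⊆ frontier(Ω) satisfy u(z) = 0 for every z ∈ Γᴰ, and let G be the associated boundary-reaching set. Then u(z) ≠ 0 for every z ∈ G, and for every connected set A ⊆ G either u(z) > 0 for all z ∈ A or u(z) < 0 for all z ∈ A. -/

import Mathlib

open Metric Set Filter Topology MeasureTheory

noncomputable section

abbrev E2 := EuclideanSpace ℝ (Fin 2)

/-- The Laplacian of `u`: the sum of the two pure second partial derivatives. -/
def lap (u : E2 → ℝ) (z : E2) : ℝ :=
  ∑ i : Fin 2, iteratedFDeriv ℝ 2 u z (fun _ => EuclideanSpace.single i 1)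

/-- On the set `G` of points whose gradient-descent flow line reaches the Dirichlet part
`Γᴰ` of the boundary in finite time, the eigenfunction `u` never vanishes; moreover `u`
has a strict constant sign on every connected subset of `G`. -/

lemma flow_endpoints_eq {U : Set E2} {u : E2 → ℝ} (hu : AnalyticOnNhd ℝ u U)
    {γ : ℝ → E2} {a b : ℝ} (hab : a < b)
    (hγd : ∀ t ∈ Icc a b, HasDerivWithinAt γ (-(gradient u (γ t))) (Icc a b) t)
    (hmem : ∀ t ∈ Icc a b, γ t ∈ U)
    (hend : u (γ a) = u (γ b)) : γ a = γ b := by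
  set s := Icc a b with hs
  have has : a ∈ s := left_mem_Icc.2 hab.le
  have hbs : b ∈ s := right_mem_Icc.2 hab.le
  have hfderiv : ∀ x ∈ U, ∀ v : E2, fderiv ℝ u x v = inner ℝ (gradient u x) v := by
    intro x hx v
    have : (InnerProductSpace.toDual ℝ E2) (gradient u x) = fderiv ℝ u x := by
      simp [gradient]
    rw [← this, InnerProductSpace.toDual_apply_apply]
  have hf : ∀ t ∈ s, HasDerivWithinAt (fun t => u (γ t))
      (-(‖gradient u (γ t)‖ ^ 2)) s t := by
    intro t ht
    have h1 : HasFDerivAt u (fderiv ℝ u (γ t)) (γ t) :=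
      ((hu _ (hmem t ht)).differentiableAt).hasFDerivAt
    have h2 := h1.comp_hasDerivWithinAt t (hγd t ht)
    have h3 : fderiv ℝ u (γ t) (-(gradient u (γ t))) = -(‖gradient u (γ t)‖ ^ 2) := by
      rw [hfderiv _ (hmem t ht), inner_neg_right, real_inner_self_eq_norm_sq]
    rwa [h3] at h2
  have hcont : ContinuousOn (fun t => u (γ t)) s := fun t ht => (hf t ht).continuousWithinAt
  have hanti : AntitoneOn (fun t => u (γ t)) s := by
    apply antitoneOn_of_hasDerivWithinAt_nonpos (convex_Icc a b) hcont
      (f' := fun t => -(‖gradient u (γ t)‖ ^ 2))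
      (fun t ht => ((hf t (interior_subset ht)).mono interior_subset))
      (fun t ht => neg_nonpos.mpr (by positivity))
  have hconst : ∀ t ∈ s, u (γ t) = u (γ a) := by
    intro t ht
    refine le_antisymm (hanti has ht ht.1) ?_
    rw [hend]; exact hanti ht hbs ht.2
  have hgrad0 : ∀ t ∈ s, gradient u (γ t) = 0 := by
    intro t ht
    have h0 : HasDerivWithinAt (fun t => u (γ t)) 0 s t :=
      (hasDerivWithinAt_const t s (u (γ a))).congr hconst (hconst t ht)
    have hud := uniqueDiffOn_Icc hab t ht
    have := (hf t ht).derivWithin hud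
    rw [h0.derivWithin hud] at this
    have : ‖gradient u (γ t)‖ ^ 2 = 0 := by linarith [this]
    simpa using this
  have hγ0 : ∀ t ∈ s, HasDerivWithinAt γ ((fun _ => (0 : E2)) t) s t := by
    intro t ht
    have := hγd t ht
    rw [hgrad0 t ht, neg_zero] at this
    exact this
  have := Convex.norm_image_sub_le_of_norm_hasDerivWithin_le (C := 0) hγ0
    (fun t ht => by simp) (convex_Icc a b) has hbs
  rw [zero_mul] at this
  have : γ b - γ a = 0 := by
    simpa using norm_le_zero_iff.mp this
  exact (sub_eq_zero.mp this).symm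

theorem sign_on_boundary_reaching_set
    (Ω U : Set E2) (hΩne : Ω.Nonempty) (hΩo : IsOpen Ω)
    (hΩb : Bornology.IsBounded Ω)
    (hUo : IsOpen U) (hUconn : IsConnected U) (hsub : closure Ω ⊆ U)
    (lam : ℝ) (hlam : 0 < lam)
    (u : E2 → ℝ) (hu : AnalyticOnNhd ℝ u U)
    (hne : ∃ z ∈ U, u z ≠ 0)
    (heq : ∀ z ∈ U, lap u z + lam * u z = 0)
    (ΓD : Set E2) (hΓD : ΓD ⊆ frontier Ω) (hΓDzero : ∀ z ∈ ΓD, u z = 0) :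
    let G : Set E2 := {z ∈ Ω | ∃ (T : ℝ) (γ : ℝ → E2), T ≠ 0 ∧ γ 0 = z ∧
      (∀ t ∈ uIcc (0:ℝ) T, HasDerivWithinAt γ (-(gradient u (γ t))) (uIcc 0 T) t) ∧
      (∀ t ∈ uIcc (0:ℝ) T, γ t ∈ closure Ω) ∧ γ T ∈ ΓD}
    (∀ z ∈ G, u z ≠ 0) ∧
      ∀ A : Set E2, A ⊆ G → IsConnected A →
        (∀ z ∈ A, 0 < u z) ∨ (∀ z ∈ A, u z < 0) := by

  intro G
  have hfront : ∀ w ∈ ΓD, w ∉ Ω := by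
    intro w hw hwΩ
    have := hΓD hw
    rw [hΩo.frontier_eq] at this
    exact this.2 hwΩ
  have part1 : ∀ z ∈ G, u z ≠ 0 := by
    rintro z ⟨hzΩ, T, γ, hT, hγz, hγd, hγΩ, hγT⟩ huz
    have hmemU : ∀ t ∈ uIcc (0:ℝ) T, γ t ∈ U := fun t ht => hsub (hγΩ t ht)
    rcases hT.lt_or_gt with hTneg | hTpos
    · have huicc : uIcc (0:ℝ) T = Icc T 0 := by
        rw [uIcc_comm, uIcc_of_le hTneg.le]
      rw [huicc] at hγd hγΩ hmemU
      have hend : u (γ T) = u (γ 0) := by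
        rw [hγz, huz, hΓDzero _ hγT]
      have := flow_endpoints_eq hu hTneg hγd hmemU hend
      exact hfront _ hγT (by rw [this, hγz]; exact hzΩ)
    · have huicc : uIcc (0:ℝ) T = Icc 0 T := uIcc_of_le hTpos.le
      rw [huicc] at hγd hγΩ hmemU
      have hend : u (γ 0) = u (γ T) := by
        rw [hγz, huz, hΓDzero _ hγT]
      have := flow_endpoints_eq hu hTpos hγd hmemU hend
      exact hfront _ hγT (by rw [← this, hγz]; exact hzΩ)
  refine ⟨part1, ?_⟩
  intro A hA hconn
  by_contra hcon
  push_neg at hcon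
  obtain ⟨⟨x, hx, hx0⟩, ⟨y, hy, hy0⟩⟩ := hcon
  have hAU : A ⊆ U := fun w hw => hsub (subset_closure (hA hw).1)
  have hcont : ContinuousOn u A := (hu.continuousOn).mono hAU
  have hxlt : u x < 0 := lt_of_le_of_ne (hx0) (part1 x (hA hx))
  have hylt : 0 < u y := lt_of_le_of_ne (hy0) (Ne.symm (part1 y (hA hy)))
  have h0 : (0:ℝ) ∈ Icc (u x) (u y) := ⟨hxlt.le, hylt.le⟩
  obtain ⟨w, hw, hw0⟩ := hconn.isPreconnected.intermediate_value hx hy hcont h0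
  exact part1 w (hA hw) hw0
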